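/- Let Z denote the number of comparable pairs of the random interval order P_n on n points, i.e. the number of unordered pairs {i,j} of distinct indices with i ≺ j or j ≺ i. Then for every 0 < a < 1, the probability that |Z − (1/3)·n(n−1)/2| ≥ a·n(n−1)/2 is at most 2·exp(−a²n/2). -/

import Mathlib

open MeasureTheory

/-- The probability space for `n` random intervals: the `2n` endpoints are
i.i.d. uniform on `[0,1]`; we record them as `n` pairs of reals, with the
product of uniform (restricted Lebesgue) measures. -/
noncomputable def intervalMeasure (n : ℕ) : Measure (Fin n → ℝ × ℝ) :=
  Measure.pi fun _ =>
    (volume.restrict (Set.Icc (0 : ℝ) 1)).prod (volume.restrict (Set.Icc (0 : ℝ) 1))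

/-- The strict order relation of the interval order: `i ≺ j` iff the interval
with endpoints `(ω i).1, (ω i).2` lies entirely to the left of the interval
with endpoints `(ω j).1, (ω j).2`. -/
def intervalLT (n : ℕ) (ω : Fin n → ℝ × ℝ) (i j : Fin n) : Prop :=
  max (ω i).1 (ω i).2 < min (ω j).1 (ω j).2

/-- The number of linear extensions of the interval order determined by `ω`. -/
noncomputable def intervalLinExt (n : ℕ) (ω : Fin n → ℝ × ℝ) : ℕ :=
  Nat.card {f : Fin n ≃ Fin n // ∀ i j : Fin n, intervalLT n ω i j → f i < f j}

/-- The number of comparable pairs of the interval order determined by `ω`. -/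
noncomputable def intervalComp (n : ℕ) (ω : Fin n → ℝ × ℝ) : ℕ :=
  Nat.card {p : Fin n × Fin n // intervalLT n ω p.1 p.2}

open Real MeasureTheory
open scoped NNReal Classical ENNReal

section Aux


lemma key_ineq {p : ℝ} (hp0 : 0 ≤ p) (hp1 : p ≤ 1) (u : ℝ) :
    1 - p + p * exp u ≤ exp (p * u + u ^ 2 / 8) := by
  have hd : ∀ v : ℝ, 0 < 1 - p + p * exp v := by
    intro v
    rcases lt_or_ge p 1 with h | h
    · have := exp_pos v; nlinarith
    · have hp : p = 1 := le_antisymm hp1 h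
      simp [hp, exp_pos]
  set q : ℝ → ℝ := fun v => p * exp v / (1 - p + p * exp v) with hq
  have hq01 : ∀ v, 0 ≤ q v ∧ q v ≤ 1 := by
    intro v
    constructor
    · exact div_nonneg (by positivity) (hd v).le
    · rw [hq]; rw [div_le_one (hd v)]; nlinarith [exp_pos v]
  have hqd : ∀ v, HasDerivAt q (q v * (1 - q v)) v := by
    intro v
    have h1 : HasDerivAt (fun v : ℝ => 1 - p + p * exp v) (p * exp v) v := by
      simpa using ((Real.hasDerivAt_exp v).const_mul p).const_add (1 - p)
    have h2 : HasDerivAt (fun v : ℝ => p * exp v) (p * exp v) v :=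
      (Real.hasDerivAt_exp v).const_mul p
    have h5 := h2.div h1 (hd v).ne'
    refine h5.congr_deriv ?_
    rw [hq]
    field_simp [(hd v).ne']
  have hlip : LipschitzWith (4⁻¹ : ℝ≥0) q := by
    apply lipschitzWith_of_nnnorm_deriv_le (fun v => (hqd v).differentiableAt)
    intro v
    have hdq : deriv q v = q v * (1 - q v) := (hqd v).deriv
    rw [← NNReal.coe_le_coe, coe_nnnorm, hdq]
    have h1 := (hq01 v).1
    have h2 := (hq01 v).2
    rw [Real.norm_eq_abs, abs_of_nonneg (by nlinarith)]
    push_cast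
    nlinarith [sq_nonneg (2 * q v - 1)]
  have hq0 : q 0 = p := by
    rw [hq]
    simp only [exp_zero, mul_one]
    have : 1 - p + p = 1 := by ring
    rw [this, div_one]
  have hqlip : ∀ v, |q v - p| ≤ |v| / 4 := by
    intro v
    have h := hlip.dist_le_mul v 0
    rw [Real.dist_eq, Real.dist_eq, hq0, sub_zero] at h
    calc |q v - p| ≤ (4⁻¹ : ℝ≥0) * |v| := by exact_mod_cast h
    _ = |v| / 4 := by push_cast; ring
  -- φ v := log (1 - p + p * exp v) - p * v ;  D v := v^2/8 - φ v
  set φ : ℝ → ℝ := fun v => Real.log (1 - p + p * exp v) - p * v with hφ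
  have hφd : ∀ v, HasDerivAt φ (q v - p) v := by
    intro v
    have h1 : HasDerivAt (fun v : ℝ => 1 - p + p * exp v) (p * exp v) v := by
      simpa using ((Real.hasDerivAt_exp v).const_mul p).const_add (1 - p)
    have h2 := (h1.log (hd v).ne').sub ((hasDerivAt_id v).const_mul p)
    simp [hq, mul_comm] at h2; exact h2
  set D : ℝ → ℝ := fun v => v ^ 2 / 8 - φ v with hD
  have hDd : ∀ v, HasDerivAt D (v / 4 - (q v - p)) v := by
    intro v
    have h1 : HasDerivAt (fun v : ℝ => v ^ 2 / 8) (v / 4) v := by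
      have := (hasDerivAt_pow 2 v).div_const 8
      exact this.congr_deriv (by push_cast; ring)
    exact h1.sub (hφd v)
  have hD0 : D 0 = 0 := by
    simp [hD, hφ]
  have hDnonneg : ∀ v, 0 ≤ D v := by
    intro v
    rcases le_total 0 v with h | h
    · have hmono : MonotoneOn D (Set.Ici (0:ℝ)) := by
        apply monotoneOn_of_deriv_nonneg (convex_Ici 0)
          (Continuous.continuousOn (by
            have : ∀ v, HasDerivAt D (v / 4 - (q v - p)) v := hDd
            exact (continuous_iff_continuousAt.2
              (fun v => (hDd v).continuousAt))))
          (fun x hx => (hDd x).differentiableAt.differentiableWithinAt)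
        intro x hx
        rw [(hDd x).deriv]
        have := hqlip x
        rw [interior_Ici] at hx
        rw [abs_of_pos (Set.mem_Ioi.1 hx)] at this
        have := abs_le.1 (hqlip x)
        rw [abs_of_pos (Set.mem_Ioi.1 hx)] at this
        linarith [this.2]
      have := hmono (Set.self_mem_Ici) (Set.mem_Ici.2 h) h
      linarith [hD0 ▸ this]
    · have hmono : AntitoneOn D (Set.Iic (0:ℝ)) := by
        apply antitoneOn_of_deriv_nonpos (convex_Iic 0)
          (Continuous.continuousOn (continuous_iff_continuousAt.2
              (fun v => (hDd v).continuousAt)))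
          (fun x hx => (hDd x).differentiableAt.differentiableWithinAt)
        intro x hx
        rw [(hDd x).deriv]
        rw [interior_Iic] at hx
        have := abs_le.1 (hqlip x)
        rw [abs_of_neg hx] at this
        linarith [this.1]
      have := hmono (Set.mem_Iic.2 h) (Set.self_mem_Iic) h
      linarith [hD0 ▸ this]
  have hfin := hDnonneg u
  have hlog : Real.log (1 - p + p * exp u) ≤ p * u + u ^ 2 / 8 := by
    simp only [hD, hφ] at hfin
    linarith
  calc 1 - p + p * exp u = exp (Real.log (1 - p + p * exp u)) := (exp_log (hd u)).symm
  _ ≤ exp (p * u + u ^ 2 / 8) := exp_le_exp.2 hlog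


lemma integrable_of_abs_le {α : Type*} [MeasurableSpace α] {ν : Measure α}
    [IsFiniteMeasure ν] {f : α → ℝ} (hm : AEStronglyMeasurable f ν) {C : ℝ}
    (hb : ∀ x, |f x| ≤ C) : Integrable f ν :=
  Integrable.mono' (integrable_const C) hm (Filter.Eventually.of_forall fun x => by
    simpa using hb x)

lemma hoeffding_mgf {α : Type*} [MeasurableSpace α] {ν : Measure α}
    [IsProbabilityMeasure ν] {h : α → ℝ} (hm : AEStronglyMeasurable h ν)
    {m c : ℝ} (hint : ∀ x, h x ∈ Set.Icc m (m + c)) (L : ℝ) :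
    ∫ x, exp (L * h x) ∂ν ≤ exp (L * ∫ x, h x ∂ν + L ^ 2 * c ^ 2 / 8) := by
  have hne : Nonempty α := by
    by_contra hc
    rw [not_nonempty_iff] at hc
    have h1 : ν Set.univ = 1 := measure_univ
    rw [Set.univ_eq_empty_iff.mpr hc] at h1
    simp at h1
  obtain ⟨x₀⟩ := hne
  have hc0 : 0 ≤ c := by
    have := hint x₀
    have h1 := this.1; have h2 := this.2
    linarith
  -- boundedness of h
  have hhb : ∀ x, |h x| ≤ |m| + |c| := by
    intro x
    have h1 := (hint x).1; have h2 := (hint x).2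
    rw [abs_le]
    constructor
    · have := neg_abs_le m; linarith [abs_nonneg c]
    · have := le_abs_self m; have := le_abs_self c; linarith
  have hInth : Integrable h ν := integrable_of_abs_le hm (hhb)
  have hImean1 : m ≤ ∫ x, h x ∂ν := by
    have := integral_mono (integrable_const m) hInth (fun x => (hint x).1)
    simpa using this
  have hImean2 : ∫ x, h x ∂ν ≤ m + c := by
    have := integral_mono hInth (integrable_const (m + c)) (fun x => (hint x).2)
    simpa using this
  rcases eq_or_lt_of_le hc0 with hc | hc
  · -- c = 0
    have hconst : ∀ x, h x = m := fun x => le_antisymm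
      (by have := (hint x).2; rw [← hc] at this; simpa using this) (hint x).1
    have h1 : ∫ x, exp (L * h x) ∂ν = exp (L * m) := by
      rw [show (fun x => exp (L * h x)) = fun _ => exp (L * m) from
        funext fun x => by rw [hconst x]]
      simp
    have h2 : ∫ x, h x ∂ν = m := by
      rw [show h = fun _ => m from funext hconst]; simp
    rw [h1, h2, ← hc]
    simp
  -- c > 0
  set t : α → ℝ := fun x => (h x - m) / c with ht
  have ht01 : ∀ x, 0 ≤ t x ∧ t x ≤ 1 := by
    intro x
    have h1 := (hint x).1; have h2 := (hint x).2
    constructor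
    · exact div_nonneg (by linarith) hc.le
    · rw [div_le_one hc]; linarith
  have hpoint : ∀ x, exp (L * h x) ≤
      exp (L * m) + t x * (exp (L * (m + c)) - exp (L * m)) := by
    intro x
    have h1 := (ht01 x).1; have h2 := (ht01 x).2
    have hcomb : (1 - t x) * (L * m) + t x * (L * (m + c)) = L * h x := by
      have : t x * c = h x - m := by rw [ht]; field_simp
      linear_combination L * this
    have := convexOn_exp.2 (Set.mem_univ (L * m)) (Set.mem_univ (L * (m + c)))
      (by linarith : (0:ℝ) ≤ 1 - t x) h1 (by ring : (1 - t x) + t x = 1)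
    rw [smul_eq_mul, smul_eq_mul, smul_eq_mul, smul_eq_mul, hcomb] at this
    calc exp (L * h x) ≤ (1 - t x) * exp (L * m) + t x * exp (L * (m + c)) := this
    _ = exp (L * m) + t x * (exp (L * (m + c)) - exp (L * m)) := by ring
  have hI1 : Integrable (fun x => exp (L * h x)) ν := by
    apply integrable_of_abs_le
    · exact (Real.continuous_exp.comp_aestronglyMeasurable (hm.const_mul L))
    · intro x
      rw [abs_of_pos (exp_pos _)]
      exact exp_le_exp.2 (le_trans (le_abs_self _)
        ((abs_mul L (h x)) ▸ mul_le_mul_of_nonneg_left (hhb x) (abs_nonneg L))) |>.trans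
        (le_of_eq rfl)
  have hIt : Integrable t ν := (hInth.sub (integrable_const m)).div_const c
  have hI2 : Integrable (fun x => exp (L * m) + t x * (exp (L * (m + c)) - exp (L * m))) ν :=
    (integrable_const _).add (hIt.mul_const _)
  have hint_t : ∫ x, t x ∂ν = ((∫ x, h x ∂ν) - m) / c := by
    rw [ht]
    rw [integral_div]
    congr 1
    rw [integral_sub hInth (integrable_const m)]
    simp
  set p : ℝ := ((∫ x, h x ∂ν) - m) / c with hp
  have hp0 : 0 ≤ p := div_nonneg (by linarith) hc.le
  have hp1 : p ≤ 1 := by rw [hp, div_le_one hc]; linarith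
  have hstep : ∫ x, exp (L * h x) ∂ν ≤
      exp (L * m) + p * (exp (L * (m + c)) - exp (L * m)) := by
    have := integral_mono hI1 hI2 hpoint
    rw [integral_add (integrable_const _) (hIt.mul_const _)] at this
    rw [integral_mul_const, hint_t] at this
    simpa using this
  have hkey : exp (L * m) + p * (exp (L * (m + c)) - exp (L * m)) ≤
      exp (L * ∫ x, h x ∂ν + L ^ 2 * c ^ 2 / 8) := by
    have h1 : exp (L * m) + p * (exp (L * (m + c)) - exp (L * m)) =
        exp (L * m) * (1 - p + p * exp (L * c)) := by
      rw [show L * (m + c) = L * m + L * c by ring, exp_add]; ring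
    rw [h1]
    have h2 := key_ineq hp0 hp1 (L * c)
    calc exp (L * m) * (1 - p + p * exp (L * c))
        ≤ exp (L * m) * exp (p * (L * c) + (L * c) ^ 2 / 8) :=
          mul_le_mul_of_nonneg_left h2 (exp_pos _).le
    _ = exp (L * m + p * (L * c) + L ^ 2 * c ^ 2 / 8) := by rw [← exp_add]; ring_nf
    _ = exp (L * ∫ x, h x ∂ν + L ^ 2 * c ^ 2 / 8) := by
          congr 1
          have : p * c = (∫ x, h x ∂ν) - m := by rw [hp]; field_simp
          linear_combination L * this
  exact hstep.trans hkey


lemma abs_integral_le_of_abs_le {α : Type*} [MeasurableSpace α] {ν : Measure α}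
    [IsProbabilityMeasure ν] {f : α → ℝ} (hm : AEStronglyMeasurable f ν) {C : ℝ}
    (hC : 0 ≤ C) (hb : ∀ x, |f x| ≤ C) : |∫ x, f x ∂ν| ≤ C := by
  have hI : Integrable f ν := integrable_of_abs_le hm hb
  have h1 : |∫ x, f x ∂ν| ≤ ∫ x, |f x| ∂ν := by
    simpa [Real.norm_eq_abs] using norm_integral_le_integral_norm f (μ := ν)
  have h2 : ∫ x, |f x| ∂ν ≤ ∫ _x, C ∂ν := integral_mono hI.abs (integrable_const C) hb
  have h3 : ∫ _x, C ∂ν = C := by simp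
  linarith

/-- helper: `insertNth` at `0` with an updated tail. -/
lemma insertNth_update_tail {α : Type*} {n : ℕ} (x : α) (y : Fin n → α) (k : Fin n) (z : α) :
    (0 : Fin (n + 1)).insertNth x (Function.update y k z) =
      Function.update ((0 : Fin (n + 1)).insertNth x y : Fin (n + 1) → α) k.succ z := by
  ext j
  cases j using Fin.cases with
  | zero =>
      rw [Function.update_of_ne (Ne.symm (Fin.succ_ne_zero k))]
      simp
  | succ j =>
      simp only [Fin.insertNth_zero, Fin.cons_succ]
      by_cases hjk : j = k
      · subst hjk
        simp
      · rw [Function.update_of_ne hjk, Function.update_of_ne (by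
          simpa [Fin.succ_inj] using hjk)]
        simp [Fin.insertNth_zero, Fin.cons_succ]

lemma mcdiarmid_mgf {α : Type*} [MeasurableSpace α] (ν : Measure α)
    [IsProbabilityMeasure ν] [Nonempty α] :
    ∀ (n : ℕ) (f : (Fin n → α) → ℝ) (M : ℝ) (c : Fin n → ℝ),
      StronglyMeasurable f → (∀ ω, |f ω| ≤ M) →
      (∀ (k : Fin n) (ω : Fin n → α) (x x' : α),
        f (Function.update ω k x) - f (Function.update ω k x') ≤ c k) →
      ∀ L : ℝ, ∫ ω, exp (L * f ω) ∂(Measure.pi fun _ : Fin n => ν) ≤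
        exp (L * (∫ ω, f ω ∂(Measure.pi fun _ : Fin n => ν)) + L ^ 2 * (∑ k, c k ^ 2) / 8) := by
  intro n
  induction n with
  | zero =>
      intro f M c hfm hfb hosc L
      have hf0 : ∀ ω : Fin 0 → α, f ω = f (fun i => i.elim0) :=
        fun ω => congrArg f (Subsingleton.elim _ _)
      simp only [hf0]
      simp [integral_const]
  | succ n IH =>
      intro f M c hfm hfb hosc L
      set e := MeasurableEquiv.piFinSuccAbove (fun _ : Fin (n + 1) => α) 0 with he
      have mp : MeasurePreserving e (Measure.pi fun _ : Fin (n + 1) => ν)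
          (ν.prod (Measure.pi fun _ : Fin n => ν)) :=
        measurePreserving_piFinSuccAbove (fun _ => ν) 0
      have hesymm : ∀ (x : α) (y : Fin n → α), e.symm (x, y) = (0 : Fin (n+1)).insertNth x y :=
        fun x y => rfl
      set f' : α × (Fin n → α) → ℝ := fun z => f (e.symm z) with hf'
      have hf'm : StronglyMeasurable f' := hfm.comp_measurable e.symm.measurable
      have hf'b : ∀ z, |f' z| ≤ M := fun z => hfb _
      set g : (Fin n → α) → ℝ := fun y => ∫ x, f' (x, y) ∂ν with hg
      have hgm : StronglyMeasurable g := hf'm.integral_prod_left'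
      have hgb : ∀ y, |g y| ≤ M := by
        intro y
        apply abs_integral_le_of_abs_le
          ((hf'm.comp_measurable (measurable_id.prodMk measurable_const)).aestronglyMeasurable)
          (le_trans (abs_nonneg _) (hfb (Classical.arbitrary _))) (fun x => hf'b _)
      -- oscillation of f' in the first variable
      have hosc0 : ∀ (y : Fin n → α) (x x' : α), f' (x, y) - f' (x', y) ≤ c 0 := by
        intro y x x'
        have h1 : f' (x, y) = f (Function.update ((0:Fin (n+1)).insertNth x' y) 0 x) := by
          show f (e.symm (x, y)) = _
          rw [hesymm, Fin.update_insertNth]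
        have h2 : f' (x', y) = f (Function.update ((0:Fin (n+1)).insertNth x' y) 0 x') := by
          show f (e.symm (x', y)) = _
          rw [hesymm, Fin.update_insertNth]
        rw [h1, h2]
        exact hosc 0 _ x x'
      -- inner Hoeffding bound
      have hinner : ∀ y : Fin n → α,
          ∫ x, exp (L * f' (x, y)) ∂ν ≤ exp (L * g y + L ^ 2 * c 0 ^ 2 / 8) := by
        intro y
        have hbdd : BddBelow (Set.range fun x => f' (x, y)) :=
          ⟨-M, by rintro r ⟨x, rfl⟩; exact (abs_le.1 (hf'b (x, y))).1⟩
        set my : ℝ := ⨅ x, f' (x, y) with hmy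
        have hIcc : ∀ x, f' (x, y) ∈ Set.Icc my (my + c 0) := by
          intro x
          constructor
          · exact ciInf_le hbdd x
          · have : f' (x, y) - c 0 ≤ my := le_ciInf fun x' => by
              have := hosc0 y x x'; linarith
            linarith
        exact hoeffding_mgf
          ((hf'm.comp_measurable (measurable_id.prodMk measurable_const)).aestronglyMeasurable)
          hIcc L
      -- rewrite the integral via the measure preserving equivalence
      have hrw : ∫ ω, exp (L * f ω) ∂(Measure.pi fun _ : Fin (n+1) => ν) =
          ∫ z, exp (L * f' z) ∂(ν.prod (Measure.pi fun _ : Fin n => ν)) := by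
        rw [← mp.integral_comp e.measurableEmbedding (fun z => exp (L * f' z))]
        congr 1
        ext ω
        rw [hf']
        simp
      have hrwf : ∫ ω, f ω ∂(Measure.pi fun _ : Fin (n+1) => ν) =
          ∫ z, f' z ∂(ν.prod (Measure.pi fun _ : Fin n => ν)) := by
        rw [← mp.integral_comp e.measurableEmbedding f']
        congr 1
        ext ω
        rw [hf']
        simp
      have hIexp : Integrable (fun z => exp (L * f' z)) (ν.prod (Measure.pi fun _ : Fin n => ν)) := by
        apply integrable_of_abs_le
          ((Real.continuous_exp.comp_stronglyMeasurable (hf'm.const_mul L)).aestronglyMeasurable)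
        intro z
        rw [abs_of_pos (exp_pos _)]
        exact exp_le_exp.2 (le_trans (le_abs_self _)
          ((abs_mul L (f' z)) ▸ mul_le_mul_of_nonneg_left (hf'b z) (abs_nonneg L)))
      have hfub : ∫ z, exp (L * f' z) ∂(ν.prod (Measure.pi fun _ : Fin n => ν)) =
          ∫ y, ∫ x, exp (L * f' (x, y)) ∂ν ∂(Measure.pi fun _ : Fin n => ν) :=
        integral_prod_symm _ hIexp
      -- integrability of outer functions
      have hIout1 : Integrable (fun y => ∫ x, exp (L * f' (x, y)) ∂ν)
          (Measure.pi fun _ : Fin n => ν) := hIexp.integral_prod_right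
      have hIout2 : Integrable (fun y => exp (L * g y + L ^ 2 * c 0 ^ 2 / 8))
          (Measure.pi fun _ : Fin n => ν) := by
        apply integrable_of_abs_le (C := exp (|L| * M + L ^ 2 * c 0 ^ 2 / 8))
          ((Real.continuous_exp.comp_stronglyMeasurable
            ((hgm.const_mul L).add_const _)).aestronglyMeasurable)
        intro y
        rw [abs_of_pos (exp_pos _)]
        apply exp_le_exp.2
        have : L * g y ≤ |L| * M := le_trans (le_abs_self _)
          ((abs_mul L (g y)) ▸ mul_le_mul_of_nonneg_left (hgb y) (abs_nonneg L))
        linarith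
      -- oscillation of g
      have hoscg : ∀ (k : Fin n) (y : Fin n → α) (z z' : α),
          g (Function.update y k z) - g (Function.update y k z') ≤ c k.succ := by
        intro k y z z'
        have hb1 : Integrable (fun x => f' (x, Function.update y k z)) ν :=
          integrable_of_abs_le
            ((hf'm.comp_measurable (measurable_id.prodMk measurable_const)).aestronglyMeasurable)
            (fun x => hf'b _)
        have hb2 : Integrable (fun x => f' (x, Function.update y k z')) ν :=
          integrable_of_abs_le
            ((hf'm.comp_measurable (measurable_id.prodMk measurable_const)).aestronglyMeasurable)
            (fun x => hf'b _)
        rw [hg]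
        simp only
        rw [← integral_sub hb1 hb2]
        calc ∫ x, (f' (x, Function.update y k z) - f' (x, Function.update y k z')) ∂ν
            ≤ ∫ _x, c k.succ ∂ν := by
              apply integral_mono (hb1.sub hb2) (integrable_const _)
              intro x
              simp only [Pi.sub_apply]
              have h1 : f' (x, Function.update y k z) =
                  f (Function.update ((0:Fin (n+1)).insertNth x y : Fin (n+1) → α) k.succ z) := by
                show f (e.symm (x, Function.update y k z)) = _
                rw [hesymm, insertNth_update_tail]
              have h2 : f' (x, Function.update y k z') =
                  f (Function.update ((0:Fin (n+1)).insertNth x y : Fin (n+1) → α) k.succ z') := by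
                show f (e.symm (x, Function.update y k z')) = _
                rw [hesymm, insertNth_update_tail]
              rw [h1, h2]
              exact hosc k.succ _ z z'
        _ = c k.succ := by simp
      -- apply IH to g
      have hIH := IH g M (fun k => c k.succ) hgm hgb hoscg L
      -- the total integral of g
      have hgint : ∫ y, g y ∂(Measure.pi fun _ : Fin n => ν) =
          ∫ ω, f ω ∂(Measure.pi fun _ : Fin (n+1) => ν) := by
        rw [hrwf]
        exact (integral_prod_symm f' (integrable_of_abs_le hf'm.aestronglyMeasurable hf'b)).symm
      -- put everything together
      calc ∫ ω, exp (L * f ω) ∂(Measure.pi fun _ : Fin (n+1) => ν)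
          = ∫ y, ∫ x, exp (L * f' (x, y)) ∂ν ∂(Measure.pi fun _ : Fin n => ν) := by
            rw [hrw, hfub]
      _ ≤ ∫ y, exp (L * g y + L ^ 2 * c 0 ^ 2 / 8) ∂(Measure.pi fun _ : Fin n => ν) :=
            integral_mono hIout1 hIout2 (fun y => hinner y)
      _ = exp (L ^ 2 * c 0 ^ 2 / 8) * ∫ y, exp (L * g y) ∂(Measure.pi fun _ : Fin n => ν) := by
            simp_rw [exp_add, mul_comm]
            rw [integral_const_mul]
      _ ≤ exp (L ^ 2 * c 0 ^ 2 / 8) *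
            exp (L * (∫ y, g y ∂(Measure.pi fun _ : Fin n => ν)) +
              L ^ 2 * (∑ k : Fin n, c k.succ ^ 2) / 8) :=
            mul_le_mul_of_nonneg_left hIH (exp_pos _).le
      _ = exp (L * (∫ ω, f ω ∂(Measure.pi fun _ : Fin (n+1) => ν)) +
            L ^ 2 * (∑ k : Fin (n+1), c k ^ 2) / 8) := by
            rw [← exp_add, hgint, Fin.sum_univ_succ]
            congr 1
            ring


noncomputable def compReal (n : ℕ) (ω : Fin n → ℝ × ℝ) : ℝ :=
  ∑ p : Fin n × Fin n, if intervalLT n ω p.1 p.2 then (1 : ℝ) else 0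

lemma compReal_eq (n : ℕ) (ω : Fin n → ℝ × ℝ) :
    (intervalComp n ω : ℝ) = compReal n ω := by
  rw [intervalComp, compReal, Nat.card_eq_fintype_card, Fintype.card_subtype]
  rw [Finset.card_filter]
  push_cast
  apply Finset.sum_congr rfl
  intro p _
  split <;> simp

lemma intervalLT_irrefl (n : ℕ) (ω : Fin n → ℝ × ℝ) (i : Fin n) : ¬ intervalLT n ω i i := by
  rw [intervalLT]
  intro h
  exact absurd (h.trans_le (min_le_max)) (lt_irrefl _)

lemma intervalLT_asymm (n : ℕ) (ω : Fin n → ℝ × ℝ) (i j : Fin n) :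
    intervalLT n ω i j → ¬ intervalLT n ω j i := by
  rw [intervalLT, intervalLT]
  intro h1 h2
  have := h1.trans_le min_le_max
  have := h2.trans_le min_le_max
  linarith

lemma compReal_bound (n : ℕ) (ω : Fin n → ℝ × ℝ) : |compReal n ω| ≤ (n : ℝ) ^ 2 := by
  rw [compReal, abs_of_nonneg (Finset.sum_nonneg fun p _ => by positivity)]
  calc ∑ p : Fin n × Fin n, (if intervalLT n ω p.1 p.2 then (1:ℝ) else 0)
      ≤ ∑ _p : Fin n × Fin n, (1:ℝ) := Finset.sum_le_sum (fun p _ => by split <;> norm_num)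
  _ = (n : ℝ) ^ 2 := by simp [sq]

/-- `intervalLT` only depends on the two relevant coordinates. -/
lemma intervalLT_congr {n : ℕ} {ω ω' : Fin n → ℝ × ℝ} {i j : Fin n}
    (hi : ω i = ω' i) (hj : ω j = ω' j) :
    intervalLT n ω i j ↔ intervalLT n ω' i j := by
  rw [intervalLT, intervalLT, hi, hj]

/-- Changing one interval changes the count by at most `n - 1`. -/
lemma compReal_osc (n : ℕ) (k : Fin n) (ω : Fin n → ℝ × ℝ) (x x' : ℝ × ℝ) :
    compReal n (Function.update ω k x) - compReal n (Function.update ω k x') ≤ (n : ℝ) - 1 := by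
  set A : Finset (Fin n × Fin n) := {k} ×ˢ Finset.univ with hA
  set B : Finset (Fin n × Fin n) := Finset.univ ×ˢ {k} with hB
  have key : ∀ z : ℝ × ℝ, compReal n (Function.update ω k z) =
      (∑ p ∈ Finset.univ.filter (fun p : Fin n × Fin n => p.1 ≠ k ∧ p.2 ≠ k),
        if intervalLT n (Function.update ω k z) p.1 p.2 then (1:ℝ) else 0) +
      (∑ j : Fin n,
        ((if intervalLT n (Function.update ω k z) k j then (1:ℝ) else 0) +
         (if intervalLT n (Function.update ω k z) j k then (1:ℝ) else 0))) := by
    intro z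
    set F : Fin n × Fin n → ℝ :=
      fun p => if intervalLT n (Function.update ω k z) p.1 p.2 then (1:ℝ) else 0 with hF
    rw [compReal]
    rw [← Finset.sum_filter_add_sum_filter_not Finset.univ
      (fun p : Fin n × Fin n => p.1 ≠ k ∧ p.2 ≠ k) F]
    congr 1
    have hset : Finset.univ.filter (fun p : Fin n × Fin n => ¬(p.1 ≠ k ∧ p.2 ≠ k)) = A ∪ B := by
      ext p
      simp only [hA, hB, Finset.mem_filter, Finset.mem_univ, true_and, Finset.mem_union,
        Finset.mem_product, Finset.mem_singleton, not_and_or, not_not, and_true]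
    rw [hset]
    have hinter : A ∩ B = {(k, k)} := by
      ext p
      simp only [hA, hB, Finset.mem_inter, Finset.mem_product, Finset.mem_singleton,
        Finset.mem_univ, true_and, and_true, Prod.ext_iff]
    have hui := Finset.sum_union_inter (s₁ := A) (s₂ := B) (f := F)
    rw [hinter] at hui
    have hAeq : ∑ p ∈ A, F p = ∑ j : Fin n, F (k, j) := by
      rw [hA, Finset.sum_product, Finset.sum_singleton]
    have hBeq : ∑ p ∈ B, F p = ∑ j : Fin n, F (j, k) := by
      rw [hB, Finset.sum_product]
      apply Finset.sum_congr rfl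
      intro j _
      rw [Finset.sum_singleton]
    have hkk : F (k, k) = 0 := by
      rw [hF]
      simp only [if_neg (intervalLT_irrefl n _ k)]
    have hsingle : ∑ p ∈ ({(k, k)} : Finset (Fin n × Fin n)), F p = 0 := by
      rw [Finset.sum_singleton, hkk]
    have : ∑ p ∈ A ∪ B, F p = (∑ j : Fin n, F (k, j)) + ∑ j : Fin n, F (j, k) := by
      rw [← hAeq, ← hBeq]
      linarith
    rw [this, ← Finset.sum_add_distrib]
  -- the part not involving k is unchanged
  have hS : (∑ p ∈ Finset.univ.filter (fun p : Fin n × Fin n => p.1 ≠ k ∧ p.2 ≠ k),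
        if intervalLT n (Function.update ω k x) p.1 p.2 then (1:ℝ) else 0) =
      (∑ p ∈ Finset.univ.filter (fun p : Fin n × Fin n => p.1 ≠ k ∧ p.2 ≠ k),
        if intervalLT n (Function.update ω k x') p.1 p.2 then (1:ℝ) else 0) := by
    apply Finset.sum_congr rfl
    intro p hp
    rw [Finset.mem_filter] at hp
    obtain ⟨-, h1, h2⟩ := hp
    apply if_congr _ rfl rfl
    exact intervalLT_congr
      (by rw [Function.update_of_ne h1, Function.update_of_ne h1])
      (by rw [Function.update_of_ne h2, Function.update_of_ne h2])
  -- the part involving k is between 0 and n - 1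
  have hT : ∀ z : ℝ × ℝ, (∑ j : Fin n,
        ((if intervalLT n (Function.update ω k z) k j then (1:ℝ) else 0) +
         (if intervalLT n (Function.update ω k z) j k then (1:ℝ) else 0))) ≤ (n:ℝ) - 1 := by
    intro z
    have hle : ∀ j : Fin n,
        ((if intervalLT n (Function.update ω k z) k j then (1:ℝ) else 0) +
         (if intervalLT n (Function.update ω k z) j k then (1:ℝ) else 0)) ≤
        if j = k then 0 else 1 := by
      intro j
      by_cases hjk : j = k
      · subst hjk
        simp [intervalLT_irrefl n _ j]
      · rw [if_neg hjk]
        split_ifs with h1 h2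
        · exact absurd h2 (intervalLT_asymm n _ k j h1)
        · norm_num
        · norm_num
        · norm_num
    calc (∑ j : Fin n,
        ((if intervalLT n (Function.update ω k z) k j then (1:ℝ) else 0) +
         (if intervalLT n (Function.update ω k z) j k then (1:ℝ) else 0)))
        ≤ ∑ j : Fin n, if j = k then (0:ℝ) else 1 := Finset.sum_le_sum fun j _ => hle j
    _ = (∑ _j : Fin n, (1:ℝ)) - ∑ j : Fin n, (if j = k then (1:ℝ) else 0) := by
        rw [← Finset.sum_sub_distrib]
        apply Finset.sum_congr rfl
        intro j _
        split_ifs <;> ring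
    _ = (n : ℝ) - 1 := by
        rw [Finset.sum_ite_eq' Finset.univ k (fun _ => (1:ℝ))]
        simp
  have hT0 : ∀ z : ℝ × ℝ, (0:ℝ) ≤ (∑ j : Fin n,
        ((if intervalLT n (Function.update ω k z) k j then (1:ℝ) else 0) +
         (if intervalLT n (Function.update ω k z) j k then (1:ℝ) else 0))) :=
    fun z => Finset.sum_nonneg fun j _ => by positivity
  rw [key x, key x', hS]
  have := hT x
  have := hT0 x'
  linarith


noncomputable def nu0 : Measure ℝ := volume.restrict (Set.Icc (0 : ℝ) 1)

instance : IsProbabilityMeasure nu0 := by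
  constructor
  rw [nu0, Measure.restrict_apply MeasurableSet.univ]
  simp [Real.volume_Icc]

/-- marginal of a product measure on two distinct coordinates -/
lemma map_pair_pi {β : Type*} [MeasurableSpace β] (κ : Measure β) [IsProbabilityMeasure κ]
    {n : ℕ} {i j : Fin n} (hij : i ≠ j) :
    Measure.map (fun ω : Fin n → β => (ω i, ω j)) (Measure.pi fun _ => κ) = κ.prod κ := by
  have hmeas : Measurable (fun ω : Fin n → β => (ω i, ω j)) :=
    (measurable_pi_apply i).prodMk (measurable_pi_apply j)
  refine (Measure.prod_eq fun s t hs ht => ?_).symm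
  rw [Measure.map_apply hmeas (hs.prod ht)]
  have hpre : (fun ω : Fin n → β => (ω i, ω j)) ⁻¹' (s ×ˢ t) =
      Set.pi Set.univ (fun k => if k = i then s else if k = j then t else Set.univ) := by
    ext ω
    simp only [Set.mem_preimage, Set.mem_prod, Set.mem_pi, Set.mem_univ, true_implies]
    constructor
    · rintro ⟨h1, h2⟩ k
      split_ifs with hki hkj
      · subst hki; exact h1
      · subst hkj; exact h2
      · trivial
    · intro h
      constructor
      · have := h i; rwa [if_pos rfl] at this
      · have := h j; rwa [if_neg (Ne.symm hij), if_pos rfl] at this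
  rw [hpre, Measure.pi_pi]
  have hfun : (fun k : Fin n => κ (if k = i then s else if k = j then t else Set.univ)) =
      Function.update (Function.update (fun _ : Fin n => (1 : ℝ≥0∞)) i (κ s)) j (κ t) := by
    funext k
    by_cases hki : k = i
    · subst hki
      rw [if_pos rfl, Function.update_of_ne hij, Function.update_self]
    · by_cases hkj : k = j
      · subst hkj
        rw [if_neg hki, if_pos rfl, Function.update_self]
      · rw [if_neg hki, if_neg hkj, Function.update_of_ne hkj, Function.update_of_ne hki]
        exact measure_univ
  rw [hfun, Finset.prod_update_of_mem (Finset.mem_univ j),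
    Finset.sdiff_singleton_eq_erase,
    Finset.prod_update_of_mem (Finset.mem_erase.2 ⟨hij, Finset.mem_univ i⟩)]
  simp [mul_comm]

noncomputable def nu : Measure (ℝ × ℝ) := nu0.prod nu0

instance : IsProbabilityMeasure nu := by rw [nu]; infer_instance

def Tset : Set ((ℝ × ℝ) × (ℝ × ℝ)) := {q | max q.1.1 q.1.2 < min q.2.1 q.2.2}

lemma Tset_meas : MeasurableSet Tset :=
  measurableSet_lt (measurable_fst.fst.max measurable_fst.snd)
    (measurable_snd.fst.min measurable_snd.snd)

lemma nu0_Icc : nu0 (Set.Icc (0:ℝ) 1) = 1 := by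
  rw [nu0, Measure.restrict_apply measurableSet_Icc]
  simp [Real.volume_Icc]

lemma nu0_Ioi {t : ℝ} (ht : 0 ≤ t) : nu0 (Set.Ioi t) = ENNReal.ofReal (1 - t) := by
  rw [nu0, Measure.restrict_apply measurableSet_Ioi]
  have h : Set.Ioi t ∩ Set.Icc 0 1 = Set.Ioc t 1 := by
    ext x
    simp only [Set.mem_inter_iff, Set.mem_Ioi, Set.mem_Icc, Set.mem_Ioc]
    constructor
    · rintro ⟨h1, _, h3⟩; exact ⟨h1, h3⟩
    · rintro ⟨h1, h2⟩; exact ⟨h1, le_trans ht h1.le, h2⟩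
  rw [h, Real.volume_Ioc]

lemma nu_upper {t : ℝ} (ht : 0 ≤ t) :
    nu {v : ℝ × ℝ | t < min v.1 v.2} = ENNReal.ofReal (1 - t) * ENNReal.ofReal (1 - t) := by
  have h : {v : ℝ × ℝ | t < min v.1 v.2} = Set.Ioi t ×ˢ Set.Ioi t := by
    ext v
    simp [lt_min_iff, Set.mem_prod]
  rw [nu, h, Measure.prod_prod, nu0_Ioi ht]

lemma box_ae : ∀ᵐ u ∂nu, u ∈ Set.Icc (0:ℝ) 1 ×ˢ Set.Icc (0:ℝ) 1 := by
  have hbox : nu (Set.Icc (0:ℝ) 1 ×ˢ Set.Icc (0:ℝ) 1) = 1 := by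
    rw [nu, Measure.prod_prod, nu0_Icc, one_mul]
  have hmeas : MeasurableSet (Set.Icc (0:ℝ) 1 ×ˢ Set.Icc (0:ℝ) 1) :=
    measurableSet_Icc.prod measurableSet_Icc
  have hc : nu (Set.Icc (0:ℝ) 1 ×ˢ Set.Icc (0:ℝ) 1)ᶜ = 0 := by
    rw [measure_compl hmeas (measure_ne_top _ _), hbox, measure_univ, tsub_self]
  rw [MeasureTheory.ae_iff]
  convert hc using 2
  rfl

lemma integrable_box_bound {f : ℝ × ℝ → ℝ} (hf : AEStronglyMeasurable f nu) {C : ℝ}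
    (hb : ∀ u ∈ Set.Icc (0:ℝ) 1 ×ˢ Set.Icc (0:ℝ) 1, |f u| ≤ C) : Integrable f nu := by
  apply Integrable.mono' (integrable_const C) hf
  filter_upwards [box_ae] with u hu
  simpa using hb u hu

lemma interval_sq_int (x : ℝ) :
    ∫ y in x..1, (1 - y) ^ 2 = 1/3 - x + x^2 - x^3/3 := by
  have h : ∀ y : ℝ, (1 - y) ^ 2 = 1 - 2 * y + y ^ 2 := fun y => by ring
  simp_rw [h]
  rw [intervalIntegral.integral_add
      ((Continuous.intervalIntegrable (by continuity) _ _ :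
        IntervalIntegrable (fun y : ℝ => 1 - 2 * y) volume x 1))
      ((continuous_pow 2).intervalIntegrable _ _),
    intervalIntegral.integral_sub intervalIntegrable_const
      ((Continuous.intervalIntegrable (by continuity) _ _ :
        IntervalIntegrable (fun y : ℝ => 2 * y) volume x 1)),
    intervalIntegral.integral_const,
    intervalIntegral.integral_const_mul, integral_id,
    integral_pow]
  simp only [smul_eq_mul]
  push_cast
  ring

lemma inner_eval {x : ℝ} (hx : x ∈ Set.Icc (0:ℝ) 1) :
    ∫ y, (1 - max x y) ^ 2 ∂nu0 = 1/3 - x^2 + 2/3 * x^3 := by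
  obtain ⟨hx0, hx1⟩ := hx
  have hrw : ∫ y, (1 - max x y) ^ 2 ∂nu0 = ∫ y in (0:ℝ)..1, (1 - max x y) ^ 2 := by
    rw [nu0, intervalIntegral.integral_of_le zero_le_one,
      ← MeasureTheory.integral_Icc_eq_integral_Ioc]
  rw [hrw]
  have hcont : ∀ a b : ℝ, IntervalIntegrable (fun y => (1 - max x y) ^ 2) volume a b :=
    fun a b => ((continuous_const.sub (continuous_const.max continuous_id)).pow 2
      ).intervalIntegrable a b
  rw [← intervalIntegral.integral_add_adjacent_intervals (a := 0) (b := x) (c := 1)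
    (hcont 0 x) (hcont x 1)]
  have h1 : ∫ y in (0:ℝ)..x, (1 - max x y) ^ 2 = x * (1 - x) ^ 2 := by
    rw [intervalIntegral.integral_congr (g := fun _ => (1 - x) ^ 2)]
    · rw [intervalIntegral.integral_const]
      simp [smul_eq_mul]
    · intro y hy
      rw [Set.uIcc_of_le hx0] at hy
      simp only
      rw [max_eq_left hy.2]
  have h2 : ∫ y in x..1, (1 - max x y) ^ 2 = 1/3 - x + x^2 - x^3/3 := by
    rw [intervalIntegral.integral_congr (g := fun y => (1 - y) ^ 2)]
    · exact interval_sq_int x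
    · intro y hy
      rw [Set.uIcc_of_le hx1] at hy
      simp only
      rw [max_eq_right hy.1]
  rw [h1, h2]
  ring

lemma real_int_eval : ∫ u, (1 - max u.1 u.2) ^ 2 ∂(nu0.prod nu0) = 1/6 := by
  have hmeas : AEStronglyMeasurable (fun u : ℝ × ℝ => (1 - max u.1 u.2) ^ 2) (nu0.prod nu0) :=
    ((continuous_const.sub (continuous_fst.max continuous_snd)).pow 2).aestronglyMeasurable
  have hint : Integrable (fun u : ℝ × ℝ => (1 - max u.1 u.2) ^ 2) (nu0.prod nu0) := by
    have : Integrable (fun u : ℝ × ℝ => (1 - max u.1 u.2) ^ 2) nu := by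
      apply integrable_box_bound hmeas (C := 1)
      rintro ⟨u1, u2⟩ ⟨⟨h1, h2⟩, h3, h4⟩
      have hm1 : (0:ℝ) ≤ max u1 u2 := le_max_of_le_left h1
      have hm2 : max u1 u2 ≤ 1 := max_le h2 h4
      rw [abs_of_nonneg (by positivity)]
      nlinarith
    rwa [nu] at this
  rw [MeasureTheory.integral_prod _ hint]
  have houter : ∫ x, (∫ y, (1 - max x y) ^ 2 ∂nu0) ∂nu0 =
      ∫ x in Set.Icc (0:ℝ) 1, (1/3 - x^2 + 2/3 * x^3) := by
    rw [nu0]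
    apply MeasureTheory.setIntegral_congr_fun measurableSet_Icc
    intro x hx
    exact inner_eval hx
  rw [houter, MeasureTheory.integral_Icc_eq_integral_Ioc,
    ← intervalIntegral.integral_of_le zero_le_one]
  rw [intervalIntegral.integral_add
      ((Continuous.intervalIntegrable (by continuity) _ _ :
        IntervalIntegrable (fun x : ℝ => 1/3 - x ^ 2) volume 0 1))
      ((Continuous.intervalIntegrable (by continuity) _ _ :
        IntervalIntegrable (fun x : ℝ => 2/3 * x ^ 3) volume 0 1)),
    intervalIntegral.integral_sub intervalIntegrable_const
      ((continuous_pow 2).intervalIntegrable _ _),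
    intervalIntegral.integral_const, intervalIntegral.integral_const_mul,
    integral_pow, integral_pow]
  norm_num

lemma nu_T : (nu.prod nu) Tset = ENNReal.ofReal (1/6) := by
  rw [Measure.prod_apply Tset_meas]
  have hpre : ∀ u : ℝ × ℝ, (Prod.mk u ⁻¹' Tset) = {v : ℝ × ℝ | max u.1 u.2 < min v.1 v.2} :=
    fun u => rfl
  have hcong : ∫⁻ u, nu (Prod.mk u ⁻¹' Tset) ∂nu =
      ∫⁻ u, ENNReal.ofReal ((1 - max u.1 u.2) ^ 2) ∂nu := by
    apply lintegral_congr_ae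
    filter_upwards [box_ae] with u hu
    obtain ⟨⟨h1, h2⟩, h3, h4⟩ := hu
    have hm1 : (0:ℝ) ≤ max u.1 u.2 := le_max_of_le_left h1
    have hm2 : max u.1 u.2 ≤ 1 := max_le h2 h4
    rw [hpre u, nu_upper hm1, ← ENNReal.ofReal_mul (by linarith)]
    congr 1
    ring
  rw [hcong]
  have hmeas : AEStronglyMeasurable (fun u : ℝ × ℝ => (1 - max u.1 u.2) ^ 2) nu :=
    ((continuous_const.sub (continuous_fst.max continuous_snd)).pow 2).aestronglyMeasurable
  have hint : Integrable (fun u : ℝ × ℝ => (1 - max u.1 u.2) ^ 2) nu := by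
    apply integrable_box_bound hmeas (C := 1)
    rintro ⟨u1, u2⟩ ⟨⟨h1, h2⟩, h3, h4⟩
    have hm1 : (0:ℝ) ≤ max u1 u2 := le_max_of_le_left h1
    have hm2 : max u1 u2 ≤ 1 := max_le h2 h4
    rw [abs_of_nonneg (by positivity)]
    nlinarith
  rw [← MeasureTheory.ofReal_integral_eq_lintegral_ofReal hint
    (Filter.Eventually.of_forall fun u => by positivity)]
  congr 1
  rw [show nu = nu0.prod nu0 from rfl] at *
  exact real_int_eval

instance : IsProbabilityMeasure (volume.restrict (Set.Icc (0 : ℝ) 1)) := by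
  constructor
  rw [Measure.restrict_apply MeasurableSet.univ]
  simp [Real.volume_Icc]

instance (n : ℕ) : IsProbabilityMeasure (intervalMeasure n) := by
  unfold intervalMeasure
  infer_instance

lemma compReal_meas (n : ℕ) : Measurable (compReal n) := by
  apply Finset.measurable_sum
  intro p _
  have hset : MeasurableSet {ω : Fin n → ℝ × ℝ | intervalLT n ω p.1 p.2} :=
    measurableSet_lt ((measurable_pi_apply p.1).fst.max (measurable_pi_apply p.1).snd)
      ((measurable_pi_apply p.2).fst.min (measurable_pi_apply p.2).snd)
  exact Measurable.ite hset measurable_const measurable_const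

lemma chi_int {n : ℕ} {i j : Fin n} (hij : i ≠ j) :
    ∫ ω, (if intervalLT n ω i j then (1:ℝ) else 0) ∂(Measure.pi fun _ : Fin n => nu) = 1/6 := by
  have hmeas : Measurable (fun ω : Fin n → ℝ × ℝ => (ω i, ω j)) :=
    (measurable_pi_apply i).prodMk (measurable_pi_apply j)
  have hpt : ∀ ω : Fin n → ℝ × ℝ, (if intervalLT n ω i j then (1:ℝ) else 0) =
      Set.indicator Tset (fun _ => (1:ℝ)) ((ω i, ω j)) := by
    intro ω
    rw [Set.indicator_apply]
    exact if_congr Iff.rfl rfl rfl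
  simp_rw [hpt]
  rw [← MeasureTheory.integral_map hmeas.aemeasurable
    ((stronglyMeasurable_const.indicator Tset_meas).aestronglyMeasurable)]
  rw [map_pair_pi nu hij]
  rw [MeasureTheory.integral_indicator_const (1:ℝ) Tset_meas]
  rw [Measure.real]
  rw [show nu.prod nu Tset = ENNReal.ofReal (1/6) from nu_T]
  rw [ENNReal.toReal_ofReal (by norm_num)]
  simp

lemma compReal_int (n : ℕ) :
    ∫ ω, compReal n ω ∂(Measure.pi fun _ : Fin n => nu) =
      (n:ℝ) * ((n:ℝ) - 1) / 6 := by
  have hI : ∀ p : Fin n × Fin n, Integrable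
      (fun ω : Fin n → ℝ × ℝ => if intervalLT n ω p.1 p.2 then (1:ℝ) else 0)
      (Measure.pi fun _ : Fin n => nu) := by
    intro p
    apply integrable_of_abs_le (C := 1)
    · exact (Measurable.ite (measurableSet_lt
        ((measurable_pi_apply p.1).fst.max (measurable_pi_apply p.1).snd)
        ((measurable_pi_apply p.2).fst.min (measurable_pi_apply p.2).snd))
        measurable_const measurable_const).aestronglyMeasurable
    · intro ω; split <;> norm_num
  simp only [compReal]
  rw [MeasureTheory.integral_finset_sum Finset.univ (fun p _ => hI p)]
  have hval : ∀ p : Fin n × Fin n,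
      ∫ ω, (if intervalLT n ω p.1 p.2 then (1:ℝ) else 0) ∂(Measure.pi fun _ : Fin n => nu) =
        if p.1 = p.2 then 0 else 1/6 := by
    intro p
    by_cases hp : p.1 = p.2
    · rw [if_pos hp]
      have : ∀ ω : Fin n → ℝ × ℝ, (if intervalLT n ω p.1 p.2 then (1:ℝ) else 0) = 0 := by
        intro ω
        rw [if_neg]
        rw [hp]
        exact intervalLT_irrefl n ω p.2
      simp_rw [this]
      simp
    · rw [if_neg hp]
      exact chi_int hp
  simp_rw [hval]
  rw [Fintype.sum_prod_type]
  have hrow : ∀ i : Fin n, (∑ j : Fin n, if i = j then (0:ℝ) else 1/6) = (n:ℝ)/6 - 1/6 := by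
    intro i
    have h1 : ∀ j : Fin n, (if i = j then (0:ℝ) else 1/6) =
        1/6 - (if i = j then (1:ℝ)/6 else 0) := by
      intro j; split_ifs <;> ring
    simp_rw [h1]
    rw [Finset.sum_sub_distrib, Finset.sum_const, Finset.sum_ite_eq]
    simp [Finset.card_univ]
    ring
  simp_rw [hrow]
  rw [Finset.sum_const, Finset.card_univ]
  simp only [Fintype.card_fin, nsmul_eq_mul]
  ring
end Aux

theorem randomIntervalOrder_comp_concentration (n : ℕ) (a : ℝ) (ha0 : 0 < a) (ha1 : a < 1) :
    intervalMeasure n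
        {ω | a * ((n : ℝ) * ((n : ℝ) - 1) / 2) ≤
          |(intervalComp n ω : ℝ) - (1 / 3) * ((n : ℝ) * ((n : ℝ) - 1) / 2)|} ≤
      ENNReal.ofReal (2 * Real.exp (-(a ^ 2) * n / 2)) := by
  by_cases hn : n ≤ 1
  · -- trivial case: the bound exceeds 1
    have hexp2 : Real.exp (1/2 : ℝ) < 2 := by
      have h1 := Real.exp_one_lt_d9
      have h2 : Real.exp (1/2 : ℝ) * Real.exp (1/2 : ℝ) = Real.exp 1 := by
        rw [← Real.exp_add]; norm_num
      nlinarith [Real.exp_pos (1/2 : ℝ)]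
    have h3 : -(1/2 : ℝ) ≤ -(a^2) * n / 2 := by
      interval_cases n
      · norm_num
      · push_cast; nlinarith
    have h4 : (1:ℝ) ≤ 2 * Real.exp (-(a^2) * n / 2) := by
      have h5 := Real.exp_le_exp.2 h3
      have h6 : Real.exp (-(1/2 : ℝ)) = (Real.exp (1/2 : ℝ))⁻¹ := by
        rw [← Real.exp_neg]
      have h7 : (1/2 : ℝ) ≤ Real.exp (-(1/2 : ℝ)) := by
        rw [h6, le_inv_comm₀] <;> first | linarith [hexp2] | positivity
      linarith
    exact le_trans prob_le_one (ENNReal.one_le_ofReal.2 h4)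
  · push_neg at hn
    have hn2 : (2:ℝ) ≤ (n:ℝ) := by exact_mod_cast hn
    have hμeq : intervalMeasure n = Measure.pi (fun _ : Fin n => nu) := rfl
    set N : ℝ := (n:ℝ) * ((n:ℝ) - 1) / 2 with hN
    set f := compReal n with hf
    set K : ℝ := (n:ℝ) * ((n:ℝ) - 1)^2 with hK
    have hKpos : 0 < K := by rw [hK]; nlinarith
    have hNpos : 0 < N := by rw [hN]; nlinarith
    set t : ℝ := a * N with ht
    have htpos : 0 < t := mul_pos ha0 hNpos
    set lam : ℝ := 4 * t / K with hlam
    have hlampos : 0 < lam := by rw [hlam]; positivity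
    set m : ℝ := (n:ℝ)*((n:ℝ)-1)/6 with hmdef
    have hm : ∫ ω, f ω ∂(Measure.pi fun _ : Fin n => nu) = m := compReal_int n
    have hmgf : ∀ L : ℝ, ∫ ω, Real.exp (L * f ω) ∂(Measure.pi fun _ : Fin n => nu) ≤
        Real.exp (L * m + L^2 * K / 8) := by
      intro L
      have h := mcdiarmid_mgf nu n f ((n:ℝ)^2) (fun _ => (n:ℝ)-1)
        (compReal_meas n).stronglyMeasurable (compReal_bound n)
        (fun k ω x x' => compReal_osc n k ω x x') L
      rw [hm] at h
      have hsum : (∑ _k : Fin n, ((n:ℝ)-1)^2) = K := by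
        rw [Finset.sum_const, Finset.card_univ, Fintype.card_fin, nsmul_eq_mul, hK]
      rwa [hsum] at h
    have hIexp : ∀ L : ℝ, Integrable (fun ω => Real.exp (L * f ω))
        (Measure.pi fun _ : Fin n => nu) := by
      intro L
      apply integrable_of_abs_le (C := Real.exp (|L| * (n:ℝ)^2))
        ((Real.continuous_exp.comp_stronglyMeasurable
          (((compReal_meas n).stronglyMeasurable).const_mul L)).aestronglyMeasurable)
      intro ω
      rw [abs_of_pos (Real.exp_pos _)]
      apply Real.exp_le_exp.2
      calc L * f ω ≤ |L * f ω| := le_abs_self _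
      _ = |L| * |f ω| := abs_mul _ _
      _ ≤ |L| * (n:ℝ)^2 := mul_le_mul_of_nonneg_left (compReal_bound n ω) (abs_nonneg L)
    have hexp_eq : -lam * t + lam^2 * K / 8 = -(a^2) * n / 2 := by
      rw [hlam, ht, hN, hK]
      have h1 : (n:ℝ) ≠ 0 := by linarith
      have h2 : (n:ℝ) - 1 ≠ 0 := by intro h; rw [sub_eq_zero] at h; rw [h] at hn2; linarith
      field_simp
      ring
    set E : ℝ := Real.exp (-(a^2) * n / 2) with hE
    have hEpos : 0 < E := Real.exp_pos _
    have hup : intervalMeasure n {ω | m + t ≤ f ω} ≤ ENNReal.ofReal E := by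
      have h := ProbabilityTheory.measure_ge_le_exp_mul_mgf
        (μ := Measure.pi fun _ : Fin n => nu) (X := f) (m + t) hlampos.le (hIexp lam)
      have hmgf' : ProbabilityTheory.mgf f (Measure.pi fun _ : Fin n => nu) lam =
          ∫ ω, Real.exp (lam * f ω) ∂(Measure.pi fun _ : Fin n => nu) := rfl
      rw [hmgf'] at h
      have h2 : (intervalMeasure n {ω | m + t ≤ f ω}).toReal ≤ E := by
        rw [hμeq]
        calc ((Measure.pi fun _ : Fin n => nu) {ω | m + t ≤ f ω}).toReal
            ≤ Real.exp (-lam * (m + t)) *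
              ∫ ω, Real.exp (lam * f ω) ∂(Measure.pi fun _ : Fin n => nu) := h
        _ ≤ Real.exp (-lam * (m + t)) * Real.exp (lam * m + lam^2 * K / 8) :=
            mul_le_mul_of_nonneg_left (hmgf lam) (Real.exp_pos _).le
        _ = Real.exp (-lam * t + lam^2 * K / 8) := by
            rw [← Real.exp_add]; congr 1; ring
        _ = E := by rw [hexp_eq]
      exact (ENNReal.le_ofReal_iff_toReal_le (measure_ne_top _ _) hEpos.le).2 h2
    have hlow : intervalMeasure n {ω | t - m ≤ -f ω} ≤ ENNReal.ofReal E := by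
      have h := ProbabilityTheory.measure_ge_le_exp_mul_mgf
        (μ := Measure.pi fun _ : Fin n => nu) (X := -f) (t - m) hlampos.le
        (by
          have heq : (fun ω => Real.exp (lam * (-f) ω)) = fun ω => Real.exp ((-lam) * f ω) := by
            funext ω; simp only [Pi.neg_apply]; congr 1; ring
          rw [heq]
          exact hIexp (-lam))
      rw [ProbabilityTheory.mgf_neg] at h
      have hmgf' : ProbabilityTheory.mgf f (Measure.pi fun _ : Fin n => nu) (-lam) =
          ∫ ω, Real.exp ((-lam) * f ω) ∂(Measure.pi fun _ : Fin n => nu) := rfl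
      rw [hmgf'] at h
      have hsetεq : {ω | t - m ≤ (-f) ω} = {ω : Fin n → ℝ × ℝ | t - m ≤ -f ω} := rfl
      rw [hsetεq] at h
      have h2 : (intervalMeasure n {ω | t - m ≤ -f ω}).toReal ≤ E := by
        rw [hμeq]
        calc ((Measure.pi fun _ : Fin n => nu) {ω | t - m ≤ -f ω}).toReal
            ≤ Real.exp (-lam * (t - m)) *
              ∫ ω, Real.exp ((-lam) * f ω) ∂(Measure.pi fun _ : Fin n => nu) := h
        _ ≤ Real.exp (-lam * (t - m)) * Real.exp ((-lam) * m + (-lam)^2 * K / 8) :=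
            mul_le_mul_of_nonneg_left (hmgf (-lam)) (Real.exp_pos _).le
        _ = Real.exp (-lam * t + lam^2 * K / 8) := by
            rw [← Real.exp_add]; congr 1; ring
        _ = E := by rw [hexp_eq]
      exact (ENNReal.le_ofReal_iff_toReal_le (measure_ne_top _ _) hEpos.le).2 h2
    have hsub : {ω : Fin n → ℝ × ℝ | a * N ≤ |(intervalComp n ω : ℝ) - (1/3) * N|} ⊆
        {ω | m + t ≤ f ω} ∪ {ω | t - m ≤ -f ω} := by
      intro ω hω
      simp only [Set.mem_setOf_eq, Set.mem_union] at hω ⊢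
      rw [compReal_eq] at hω
      have hm3 : (1/3 : ℝ) * N = m := by rw [hN, hmdef]; ring
      rw [hm3, ← ht] at hω
      rcases abs_cases (compReal n ω - m) with ⟨h1, _⟩ | ⟨h1, _⟩
      · left; rw [h1] at hω; rw [hf]; linarith
      · right; rw [h1] at hω; rw [hf]; linarith
    calc intervalMeasure n {ω | a * N ≤ |(intervalComp n ω : ℝ) - (1/3) * N|} ≤
        intervalMeasure n ({ω | m + t ≤ f ω} ∪ {ω | t - m ≤ -f ω}) := measure_mono hsub
    _ ≤ intervalMeasure n {ω | m + t ≤ f ω} + intervalMeasure n {ω | t - m ≤ -f ω} :=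
        measure_union_le _ _
    _ ≤ ENNReal.ofReal E + ENNReal.ofReal E := add_le_add hup hlow
    _ = ENNReal.ofReal (2 * Real.exp (-(a^2) * n / 2)) := by
        rw [← ENNReal.ofReal_add hEpos.le hEpos.le, hE]
        congr 1
        ring
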